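/- arXiv:1501.06098 — 2 statements merged into one kernel-verified Lean document; each statement's English description precedes it below -/
import Mathlib

section
/- Let δ, σ be positive integers with gcd(δ,σ) = 1 and δ < σ, set D = σ⁴ − δ⁴, and let x, y be positive integers with x² − D·y² = 1. For a positive integer n, set M = σ²·y·U_{n−1}(x) − T_n(x). If M is a positive integer and a, c are positive integers with 2a = T_n(x) − (σ²−δ²)·y·U_{n−1}(x) + 1 and 2c = σ·δ·y·U_{n−1}(x)·( σ²·y·U_{n−1}(x) − T_n(x) ), then S(M,a) = c². (This is the solution family arising from the fundamental solution (X₁,Y₁) = (σ²,−1).) -/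
/-- `S M a` is the sum of `M` consecutive cubes starting at `a`. -/
def S (M : ℕ) (a : ℤ) : ℤ := ∑ i ∈ Finset.range M, (a + i) ^ 3

/-- `T n x` is the `n`-th Chebyshev polynomial of the first kind evaluated at `x`. -/
noncomputable def T (n : ℤ) (x : ℤ) : ℤ := (Polynomial.Chebyshev.T ℤ n).eval x

/-- `U n x` is the `n`-th Chebyshev polynomial of the second kind evaluated at `x`. -/
noncomputable def U (n : ℤ) (x : ℤ) : ℤ := (Polynomial.Chebyshev.U ℤ n).eval x

open Polynomial in
lemma chebPell_poly (n : ℤ) :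
    (Polynomial.Chebyshev.T ℤ n) ^ 2
      - ((X : ℤ[X]) ^ 2 - 1) * (Polynomial.Chebyshev.U ℤ (n - 1)) ^ 2 = 1 := by
  have step : ∀ m : ℤ,
      (Polynomial.Chebyshev.T ℤ (m + 1)) ^ 2
        - ((X : ℤ[X]) ^ 2 - 1) * (Polynomial.Chebyshev.U ℤ m) ^ 2
      = (Polynomial.Chebyshev.T ℤ m) ^ 2
        - ((X : ℤ[X]) ^ 2 - 1) * (Polynomial.Chebyshev.U ℤ (m - 1)) ^ 2 := by
    intro m
    have h₁ := Polynomial.Chebyshev.T_eq_X_mul_T_sub_pol_U ℤ (m - 1)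
    have h₂ := Polynomial.Chebyshev.U_eq_X_mul_U_add_T ℤ (m - 1)
    simp only [sub_add_cancel, show m - 1 + 2 = m + 1 by ring, show m - 1 + 1 = m by ring] at h₁ h₂
    linear_combination
      (Polynomial.Chebyshev.T ℤ (m + 1) + X * Polynomial.Chebyshev.T ℤ m
        - (1 - X ^ 2) * Polynomial.Chebyshev.U ℤ (m - 1)) * h₁
      - ((X : ℤ[X]) ^ 2 - 1) * (Polynomial.Chebyshev.U ℤ m
        + X * Polynomial.Chebyshev.U ℤ (m - 1) + Polynomial.Chebyshev.T ℤ m) * h₂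
  induction n using Int.induction_on with
  | zero => simp [Polynomial.Chebyshev.T_zero]
  | succ k ih =>
      have h := step k
      simp only [add_sub_cancel_right]
      rw [h]; exact ih
  | pred k ih =>
      have h := step (-(k : ℤ) - 1)
      simp only [show -(k : ℤ) - 1 + 1 = -k by ring, show (-(k : ℤ) + 1) = -k + 1 by ring] at h
      rw [← h]
      exact ih

lemma chebPell (n x : ℤ) : (T n x) ^ 2 - (x ^ 2 - 1) * (U (n - 1) x) ^ 2 = 1 := by
  have h := congrArg (Polynomial.eval x) (chebPell_poly n)
  simpa [T, U] using h

lemma fourS (M : ℕ) (a : ℤ) :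
    4 * S M a = ((a + M - 1) * (a + M)) ^ 2 - ((a - 1) * a) ^ 2 := by
  induction M with
  | zero => simp [S]
  | succ m ih =>
      simp only [S, Finset.sum_range_succ] at ih ⊢
      push_cast
      linear_combination ih

/-- The solution family arising from the fundamental solution `(X₁,Y₁) = (σ²,−1)`:
with `D = σ⁴ − δ⁴`, `(x,y)` a positive solution of `x² − Dy² = 1`, `n` a positive
integer, `M = σ²·y·U_{n−1}(x) − T_n(x)` a positive integer,
`2a = T_n(x) − (σ²−δ²)·y·U_{n−1}(x) + 1` and
`2c = σδ·y·U_{n−1}(x)·(σ²·y·U_{n−1}(x) − T_n(x))`, one has `S(M,a) = c²`. -/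
theorem solutions_from_sigma_sq_neg_one (δ σ x y : ℤ)
    (hδ : 0 < δ) (hσ : 0 < σ) (hgcd : Int.gcd δ σ = 1) (hlt : δ < σ)
    (hx : 0 < x) (hy : 0 < y)
    (hPell : x ^ 2 - (σ ^ 4 - δ ^ 4) * y ^ 2 = 1)
    (n : ℤ) (hn : 0 < n)
    (M : ℕ) (hMpos : 0 < M) (hM : (M : ℤ) = σ ^ 2 * y * U (n - 1) x - T n x)
    (a c : ℤ) (hapos : 0 < a) (hcpos : 0 < c)
    (ha : 2 * a = T n x - (σ ^ 2 - δ ^ 2) * y * U (n - 1) x + 1)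
    (hc : 2 * c = σ * δ * y * U (n - 1) x * (σ ^ 2 * y * U (n - 1) x - T n x)) :
    S M a = c ^ 2 := by
  have key := chebPell n x
  set P := T n x with hP
  set Q := U (n - 1) x with hQ
  have h4 := fourS M a
  have h2 : 2 * (((a + (M : ℤ) - 1) * (a + (M : ℤ))) ^ 2 - ((a - 1) * a) ^ 2) = 8 * c ^ 2 := by
    linear_combination (- 4*c + 2*σ*δ*y*P*Q - 2*σ^3*δ*y^2*Q^2) * hc + (2*(M:ℤ) - 4*(M:ℤ)^2 + 2*(M:ℤ)^3 + 4*a - 12*a*(M:ℤ) + 8*a*(M:ℤ)^2 - 12*a^2 + 12*a^2*(M:ℤ) + 8*a^3 - 2*P + 4*P*(M:ℤ) - 2*P*(M:ℤ)^2 + 12*P*a - 8*P*a*(M:ℤ) - 12*P*a^2 - 4*P^2 + 2*P^2*(M:ℤ) + 8*P^2*a - 2*P^3 + 2*σ^2*y*Q - 4*σ^2*y*Q*(M:ℤ) + 2*σ^2*y*Q*(M:ℤ)^2 - 12*σ^2*y*Q*a + 8*σ^2*y*Q*a*(M:ℤ) + 12*σ^2*y*Q*a^2 + 8*σ^2*y*P*Q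 - 4*σ^2*y*P*Q*(M:ℤ) - 16*σ^2*y*P*Q*a + 6*σ^2*y*P^2*Q - 4*σ^4*y^2*Q^2 + 2*σ^4*y^2*Q^2*(M:ℤ) + 8*σ^4*y^2*Q^2*a - 6*σ^4*y^2*P*Q^2 + 2*σ^6*y^3*Q^3) * hM + (4*P*a - 4*P*a^2 - 2*P^2 + 4*P^2*a - 2*P^3 + δ^2*y*P*Q - 2*δ^2*y*P*Q*a + δ^2*y*P^2*Q - δ^4*y^2*P*Q^2 - 4*σ^2*y*Q*a + 4*σ^2*y*Q*a^2 + 4*σ^2*y*P*Q - 8*σ^2*y*P*Q*a + 6*σ^2*y*P^2*Q - σ^2*δ^2*y^2*Q^2 + 2*σ^2*δ^2*y^2*Q^2*a - 2*σ^2*δ^2*y^2*P*Q^2 + σ^2*δ^4*y^3*Q^3 - 2*σ^4*y^2*Q^2 + 4*σ^4*y^2*Q^2*a - 6*σ^4*y^2*P*Q^2 + σ^4*δ^2*y^3*Q^3 + 2*σ^6*y^3*Q^3) * ha + (- δ^2*y*P*Q + σ^2*δ^2*y^2*Q^2) * key + (- δ^2*y*P*Q^3 + σ^2*δ^2*y^2*Q^4)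 * hPell
  linarith
end

section
/- Let δ, σ be positive integers with gcd(δ,σ) = 1 and δ < σ, set D = σ⁴ − δ⁴, let x, y be integers with x² − D·y² = 1, and let X₁, Y₁ be integers with X₁² − D·Y₁² = δ⁴. For an integer n define the rational number c_n = (σ/(2δ³))·( X₁·y·U_{n−1}(x) + Y₁·T_n(x) )·( (σ²X₁ + (σ⁴−δ⁴)Y₁)·y·U_{n−1}(x) + (X₁ + σ²Y₁)·T_n(x) ). Then for every integer n the recurrence c_n = 2(2x² − 1)·c_{n−1} − c_{n−2} + δ·σ³·y² holds. -/
private lemma U_rec' (x : ℤ) (n : ℤ) : U (n + 2) x = 2 * x * U (n + 1) x - U n x := by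
  have h := congrArg (Polynomial.eval x) (Polynomial.Chebyshev.U_add_two ℤ n)
  simpa [U] using h

private lemma U_rec (x : ℤ) (n : ℤ) : U n x = 2 * x * U (n - 1) x - U (n - 2) x := by
  have h := U_rec' x (n - 2)
  have h1 : n - 2 + 2 = n := by ring
  have h2 : n - 2 + 1 = n - 1 := by ring
  rw [h1, h2] at h
  exact h

private lemma TU (x : ℤ) (n : ℤ) : T n x = U n x - x * U (n - 1) x := by
  have h := congrArg (Polynomial.eval x) (Polynomial.Chebyshev.T_eq_U_sub_X_mul_U ℤ n)
  simpa [T, U] using h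

private lemma U_pell (x : ℤ) : ∀ n : ℤ,
    (U (n + 1) x) ^ 2 + (U n x) ^ 2 - 2 * x * (U (n + 1) x) * (U n x) = 1 := by
  intro n
  induction n using Int.induction_on with
  | zero => simp [U]; ring
  | succ k ih =>
      have h := U_rec' x k
      have hk : (k : ℤ) + 1 + 1 = (k : ℤ) + 2 := by ring
      rw [hk]
      linear_combination ih + (U ((k : ℤ) + 2) x - U (k : ℤ) x) * h
  | pred k ih =>
      have h := U_rec' x (-(k : ℤ) - 1)
      have h1 : -(k : ℤ) - 1 + 2 = -(k : ℤ) + 1 := by ring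
      have h2 : -(k : ℤ) - 1 + 1 = -(k : ℤ) := by ring
      rw [h1, h2] at h
      have h3 : -(k : ℤ) - 1 + 1 = -(k : ℤ) := by ring
      rw [h3]
      linear_combination ih + (U (-(k:ℤ) - 1) x - U (-(k:ℤ) + 1) x) * h

/-- The sequence `cₙ` (regarded as rationals) satisfies the recurrence
`cₙ = 2(2x² − 1)·cₙ₋₁ − cₙ₋₂ + δσ³y²`. -/
theorem c_recurrence (δ σ : ℤ) (hδ : 0 < δ) (hσ : 0 < σ) (hgcd : Int.gcd δ σ = 1)
    (hlt : δ < σ) (x y : ℤ) (hPell : x ^ 2 - (σ ^ 4 - δ ^ 4) * y ^ 2 = 1)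
    (X₁ Y₁ : ℤ) (hXY : X₁ ^ 2 - (σ ^ 4 - δ ^ 4) * Y₁ ^ 2 = δ ^ 4)
    (cf : ℤ → ℚ)
    (hcf : ∀ n : ℤ, cf n = ((σ : ℚ) / (2 * (δ : ℚ) ^ 3))
        * ((X₁ : ℚ) * y * U (n - 1) x + Y₁ * T n x)
        * (((σ : ℚ) ^ 2 * X₁ + ((σ : ℚ) ^ 4 - δ ^ 4) * Y₁) * y * U (n - 1) x
            + ((X₁ : ℚ) + (σ : ℚ) ^ 2 * Y₁) * T n x)) :
    ∀ n : ℤ, cf n = 2 * (2 * (x : ℚ) ^ 2 - 1) * cf (n - 1) - cf (n - 2)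
      + (δ : ℚ) * σ ^ 3 * y ^ 2 := by
  intro n
  have i1 : n - 1 - 1 = n - 2 := by ring
  have i2 : n - 2 - 1 = n - 3 := by ring
  have e1 : U (n - 1) x = x * U (n - 2) x + T (n - 1) x := by
    have h := TU x (n - 1)
    rw [i1] at h
    linarith
  have e2 : T n x = x ^ 2 * U (n - 2) x + x * T (n - 1) x - U (n - 2) x := by
    have h1 := TU x n
    have h2 := U_rec x n
    rw [h1, h2, e1]; ring
  have e3 : U (n - 3) x = x * U (n - 2) x - T (n - 1) x := by
    have h := U_rec x (n - 1)
    have i3 : n - 1 - 2 = n - 3 := by ring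
    rw [i1, i3, e1] at h
    linarith
  have e4 : T (n - 2) x = x * T (n - 1) x - (x ^ 2 - 1) * U (n - 2) x := by
    have h := TU x (n - 2)
    rw [i2, e3] at h
    rw [h]; ring
  have e5 : (T (n - 1) x) ^ 2 - (x ^ 2 - 1) * (U (n - 2) x) ^ 2 = 1 := by
    have h := U_pell x (n - 2)
    have h1 : n - 2 + 1 = n - 1 := by ring
    rw [h1, e1] at h
    linear_combination h
  have q1 : ((U (n - 1) x : ℤ) : ℚ)
      = (x : ℚ) * U (n - 2) x + T (n - 1) x := by exact_mod_cast e1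
  have q2 : ((T n x : ℤ) : ℚ)
      = (x : ℚ) ^ 2 * U (n - 2) x + x * T (n - 1) x - U (n - 2) x := by exact_mod_cast e2
  have q3 : ((U (n - 3) x : ℤ) : ℚ)
      = (x : ℚ) * U (n - 2) x - T (n - 1) x := by exact_mod_cast e3
  have q4 : ((T (n - 2) x : ℤ) : ℚ)
      = (x : ℚ) * T (n - 1) x - ((x : ℚ) ^ 2 - 1) * U (n - 2) x := by exact_mod_cast e4
  have r3 : ((T (n - 1) x : ℤ) : ℚ) ^ 2 - ((x : ℚ) ^ 2 - 1) * ((U (n - 2) x : ℤ) : ℚ) ^ 2 = 1 := by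
    exact_mod_cast e5
  have r1 : ((x : ℚ)) ^ 2 - ((σ : ℚ) ^ 4 - (δ : ℚ) ^ 4) * (y : ℚ) ^ 2 = 1 := by
    exact_mod_cast hPell
  have r2 : ((X₁ : ℚ)) ^ 2 - ((σ : ℚ) ^ 4 - (δ : ℚ) ^ 4) * (Y₁ : ℚ) ^ 2 = (δ : ℚ) ^ 4 := by
    exact_mod_cast hXY
  have hd : (δ : ℚ) ≠ 0 := Int.cast_ne_zero.mpr hδ.ne'
  have hkey : (δ : ℚ) ^ 4 * ((δ : ℚ)⁻¹) ^ 3 = (δ : ℚ) := by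
    field_simp
  rw [hcf n, hcf (n - 1), hcf (n - 2), i1, i2, q1, q2, q3, q4]
  linear_combination ((σ : ℚ) / (2 * (δ : ℚ) ^ 3)) *
    ((2 * (Y₁ : ℚ) ^ 2 * σ ^ 2 + 2 * X₁ * Y₁ + 2 * y ^ 2 * X₁ * Y₁ * σ ^ 4
        - 2 * y ^ 2 * X₁ * Y₁ * δ ^ 4 + 2 * y ^ 2 * (X₁ : ℚ) ^ 2 * σ ^ 2
        - 2 * (x : ℚ) ^ 2 * Y₁ ^ 2 * σ ^ 2 - 2 * (x : ℚ) ^ 2 * X₁ * Y₁) * r3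
      + (-2 * (Y₁ : ℚ) ^ 2 * σ ^ 2 - 2 * (X₁ : ℚ) * Y₁) * r1
      + (2 * (y : ℚ) ^ 2 * σ ^ 2) * r2)
    + (σ : ℚ) ^ 3 * y ^ 2 * hkey
end
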